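/- Let G be a finite simple graph, let K ⊆ V(G) be a clique of G, and let s ∈ K. Set C = K ∖ {s} and r = |C|, and assume r ≥ 1 and that every vertex of C has all of its neighbors inside K (i.e., N_G(v) ⊆ K for every v ∈ C). Let H be the induced subgraph of G on V(G) ∖ K and let L be the induced subgraph of G on V(G) ∖ N_G[s], where N_G[s] = {s} ∪ N_G(s) is the closed neighborhood of s. Then P_G(x) = (1 + r·x) · P_H(x) + x · P_L(x). -/
import Mathlib

attribute [local instance] Classical.propDecidable

/-- `s` is an independent set of vertices of `G`. -/
def IsIndep {V : Type*} (G : SimpleGraph V) (s : Finset V) : Prop :=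
  ∀ v ∈ s, ∀ w ∈ s, ¬ G.Adj v w

/-- The independence polynomial `P_G(x) = ∑ g_i x^i`. -/
noncomputable def indepPoly {V : Type*} [Fintype V] (G : SimpleGraph V) : Polynomial ℤ :=
  ∑ s ∈ Finset.univ.filter (fun s : Finset V => IsIndep G s), Polynomial.X ^ s.card

lemma indepPoly_induce_eq {V : Type*} [Fintype V] (G : SimpleGraph V) (S : Set V) [Fintype S] :
    indepPoly (G.induce S) =
    ∑ A ∈ Finset.univ.filter (fun A : Finset V => (↑A : Set V) ⊆ S ∧ IsIndep G A),
      Polynomial.X ^ A.card := by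
  classical
  unfold indepPoly
  refine Finset.sum_nbij' (i := fun A => A.map (Function.Embedding.subtype _))
    (j := fun B => Finset.univ.filter (fun v : S => (v : V) ∈ B)) ?_ ?_ ?_ ?_ ?_
  · intro A hA
    simp only [Finset.mem_filter, Finset.mem_univ, true_and] at hA ⊢
    constructor
    · intro x hx
      simp only [Finset.coe_map, Function.Embedding.coe_subtype, Set.mem_image] at hx
      obtain ⟨a, _, rfl⟩ := hx
      exact a.2
    · intro v hv w hw
      simp only [Finset.mem_map, Function.Embedding.coe_subtype] at hv hw
      obtain ⟨a, ha, rfl⟩ := hv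
      obtain ⟨b, hb, rfl⟩ := hw
      exact hA a ha b hb
  · intro B hB
    simp only [Finset.mem_filter, Finset.mem_univ, true_and] at hB ⊢
    intro v hv w hw
    simp only [Finset.mem_filter, Finset.mem_univ, true_and] at hv hw
    exact hB.2 v hv w hw
  · intro A hA
    ext v
    simp [Subtype.ext_iff]
  · intro B hB
    simp only [Finset.mem_filter, Finset.mem_univ, true_and] at hB
    ext x
    simp only [Finset.mem_map, Function.Embedding.coe_subtype, Finset.mem_filter,
      Finset.mem_univ, true_and, Subtype.exists, exists_and_left, exists_prop]
    constructor
    · rintro ⟨a, ha, _, rfl⟩; exact ha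
    · intro hx; exact ⟨x, hx, hB.1 hx, rfl⟩
  · intro A hA
    rw [Finset.card_map]

lemma fiber_sum {V : Type*} [Fintype V] (G : SimpleGraph V) (K : Finset V) (v : V) (T : Set V)
    (hvK : v ∈ K)
    (hKT : ∀ x ∈ K, x ∉ T)
    (hadj : ∀ B : Finset V, (↑B : Set V) ⊆ T → ∀ w ∈ B, ¬ G.Adj v w)
    (hsub : ∀ A : Finset V, IsIndep G A → A ∩ K = {v} → (↑(A.erase v) : Set V) ⊆ T) :
    ∑ A ∈ Finset.univ.filter (fun A : Finset V => IsIndep G A ∧ A ∩ K = {v}),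
        Polynomial.X ^ A.card
      = ∑ B ∈ Finset.univ.filter (fun B : Finset V => (↑B : Set V) ⊆ T ∧ IsIndep G B),
        (Polynomial.X ^ (B.card + 1) : Polynomial ℤ) := by
  classical
  have hmemv : ∀ A : Finset V, A ∩ K = {v} → v ∈ A := by
    intro A hA
    have : v ∈ A ∩ K := by rw [hA]; exact Finset.mem_singleton_self v
    exact (Finset.mem_inter.mp this).1
  refine Finset.sum_nbij' (i := fun A => A.erase v) (j := fun B => insert v B) ?_ ?_ ?_ ?_ ?_
  · intro A hA
    simp only [Finset.mem_filter, Finset.mem_univ, true_and] at hA ⊢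
    exact ⟨hsub A hA.1 hA.2, fun a ha b hb =>
      hA.1 a (Finset.mem_of_mem_erase ha) b (Finset.mem_of_mem_erase hb)⟩
  · intro B hB
    simp only [Finset.mem_filter, Finset.mem_univ, true_and] at hB ⊢
    obtain ⟨hBT, hBind⟩ := hB
    constructor
    · intro a ha b hb
      rcases Finset.mem_insert.mp ha with rfl | ha' <;>
        rcases Finset.mem_insert.mp hb with rfl | hb'
      · exact fun h => G.irrefl h
      · exact hadj B hBT b hb'
      · exact fun h => hadj B hBT a ha' h.symm
      · exact hBind a ha' b hb'
    · ext x
      simp only [Finset.mem_inter, Finset.mem_insert, Finset.mem_singleton]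
      constructor
      · rintro ⟨rfl | hxB, hxK⟩
        · rfl
        · exact absurd (hBT hxB) (hKT x hxK)
      · rintro rfl; exact ⟨Or.inl rfl, hvK⟩
  · intro A hA
    simp only [Finset.mem_filter, Finset.mem_univ, true_and] at hA
    exact Finset.insert_erase (hmemv A hA.2)
  · intro B hB
    simp only [Finset.mem_filter, Finset.mem_univ, true_and] at hB
    exact Finset.erase_insert (fun hvB => hKT v hvK (hB.1 hvB))
  · intro A hA
    simp only [Finset.mem_filter, Finset.mem_univ, true_and] at hA
    rw [Finset.card_erase_of_mem (hmemv A hA.2),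
      Nat.sub_add_cancel (Finset.card_pos.mpr ⟨v, hmemv A hA.2⟩)]

set_option maxHeartbeats 2000000 in
/-- Leaf-clique recursion: if `K` is a clique of `G`, `s ∈ K`, `C = K ∖ {s}` has
`r = |C| ≥ 1` elements, and every vertex of `C` has all its neighbors inside `K`, then
`P_G(x) = (1 + r x) P_H(x) + x P_L(x)`, where `H` is induced on `V ∖ K` and `L` on
`V ∖ N_G[s]`. -/
theorem indepPoly_leaf_clique_recursion {V : Type*} [Fintype V] (G : SimpleGraph V)
    (K : Finset V) (s : V) (hs : s ∈ K) (hclique : G.IsClique (K : Set V))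
    (hr : 1 ≤ (K.erase s).card)
    (hleaf : ∀ v ∈ K.erase s, ∀ w, G.Adj v w → w ∈ K) :
    indepPoly G
      = (1 + Polynomial.C (((K.erase s).card : ℤ)) * Polynomial.X)
          * indepPoly (G.induce ((K : Set V)ᶜ))
        + Polynomial.X
          * indepPoly (G.induce (({s} ∪ {w | G.Adj s w} : Set V)ᶜ)) := by
  classical
  set T1 : Set V := (↑K : Set V)ᶜ with hT1
  set T2 : Set V := ({s} ∪ {w | G.Adj s w} : Set V)ᶜ with hT2
  -- K ⊆ N[s]
  have hKN : ∀ x ∈ K, x ∉ T2 := by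
    intro x hx hxT
    simp only [hT2, Set.mem_compl_iff, Set.mem_union, Set.mem_singleton_iff,
      Set.mem_setOf_eq, not_or] at hxT
    rcases eq_or_ne x s with rfl | hne
    · exact hxT.1 rfl
    · exact hxT.2 (hclique hs hx (Ne.symm hne))
  -- every indep set meets K in at most one vertex
  have hcard : ∀ A : Finset V, IsIndep G A → (A ∩ K).card ≤ 1 := by
    intro A hA
    refine Finset.card_le_one.mpr fun a ha b hb => ?_
    by_contra hne
    exact hA a (Finset.mem_inter.mp ha).1 b (Finset.mem_inter.mp hb).1
      (hclique (Finset.mem_inter.mp ha).2 (Finset.mem_inter.mp hb).2 hne)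
  -- STEP 1: split the sum
  have hsplit : indepPoly G
      = (∑ A ∈ Finset.univ.filter
            (fun A : Finset V => IsIndep G A ∧ A ∩ K = ∅), Polynomial.X ^ A.card)
        + ∑ v ∈ K, ∑ A ∈ Finset.univ.filter
            (fun A : Finset V => IsIndep G A ∧ A ∩ K = {v}), Polynomial.X ^ A.card := by
    unfold indepPoly
    rw [← Finset.sum_filter_add_sum_filter_not
      (Finset.univ.filter fun A : Finset V => IsIndep G A) (fun A => A ∩ K = ∅)]
    congr 1
    · rw [Finset.filter_filter]
    · rw [Finset.filter_filter]
      have hbU : Finset.univ.filter (fun A : Finset V => IsIndep G A ∧ ¬ A ∩ K = ∅)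
          = K.biUnion (fun v => Finset.univ.filter
              (fun A : Finset V => IsIndep G A ∧ A ∩ K = {v})) := by
        ext A
        simp only [Finset.mem_filter, Finset.mem_univ, true_and, Finset.mem_biUnion]
        constructor
        · rintro ⟨hind, hne⟩
          have h1 : (A ∩ K).card = 1 :=
            le_antisymm (hcard A hind) (Finset.card_pos.mpr (Finset.nonempty_iff_ne_empty.mpr hne))
          obtain ⟨v, hv⟩ := Finset.card_eq_one.mp h1
          have hvK : v ∈ K := by
            have : v ∈ A ∩ K := hv ▸ Finset.mem_singleton_self v
            exact (Finset.mem_inter.mp this).2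
          exact ⟨v, hvK, hind, hv⟩
        · rintro ⟨v, hvK, hind, hv⟩
          exact ⟨hind, by rw [hv]; exact Finset.singleton_ne_empty v⟩
      rw [hbU, Finset.sum_biUnion]
      intro a ha b hb hab
      simp only [Function.onFun]
      rw [Finset.disjoint_left]
      intro A hA hA'
      simp only [Finset.mem_filter, Finset.mem_univ, true_and] at hA hA'
      exact hab (by rw [← Finset.singleton_inj, ← hA.2, hA'.2])
  rw [hsplit, ← Finset.add_sum_erase K _ hs]
  -- fiber for s
  have hfs := fiber_sum G K s T2 hs hKN
    (by
      intro B hBT w hw hadj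
      have := hBT hw
      simp only [hT2, Set.mem_compl_iff, Set.mem_union, Set.mem_setOf_eq, not_or] at this
      exact this.2 hadj)
    (by
      intro A hind hA x hx
      simp only [Finset.coe_erase, Set.mem_diff, Finset.mem_coe, Set.mem_singleton_iff] at hx
      have hsA : s ∈ A := by
        have : s ∈ A ∩ K := hA ▸ Finset.mem_singleton_self s
        exact (Finset.mem_inter.mp this).1
      simp only [hT2, Set.mem_compl_iff, Set.mem_union, Set.mem_singleton_iff,
        Set.mem_setOf_eq, not_or]
      exact ⟨hx.2, hind s hsA x hx.1⟩)
  -- fibers for v ∈ K.erase s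
  have hfv : ∀ v ∈ K.erase s,
      ∑ A ∈ Finset.univ.filter
          (fun A : Finset V => IsIndep G A ∧ A ∩ K = {v}), Polynomial.X ^ A.card
        = ∑ B ∈ Finset.univ.filter
            (fun B : Finset V => (↑B : Set V) ⊆ T1 ∧ IsIndep G B),
          (Polynomial.X ^ (B.card + 1) : Polynomial ℤ) := by
    intro v hv
    refine fiber_sum G K v T1 (Finset.mem_of_mem_erase hv)
      (fun x hx hxT => hxT (Finset.mem_coe.mpr hx)) ?_ ?_
    · intro B hBT w hw hadj
      exact hBT hw (Finset.mem_coe.mpr (hleaf v hv w hadj))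
    · intro A hind hA x hx
      simp only [Finset.coe_erase, Set.mem_diff, Finset.mem_coe, Set.mem_singleton_iff] at hx
      intro hxK
      have : x ∈ A ∩ K := Finset.mem_inter.mpr ⟨hx.1, Finset.mem_coe.mp hxK⟩
      rw [hA, Finset.mem_singleton] at this
      exact hx.2 this
  rw [hfs, Finset.sum_congr rfl hfv, Finset.sum_const]
  -- the empty-intersection sum equals the H sum
  have hF0 : Finset.univ.filter (fun A : Finset V => IsIndep G A ∧ A ∩ K = ∅)
      = Finset.univ.filter (fun A : Finset V => (↑A : Set V) ⊆ T1 ∧ IsIndep G A) := by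
    ext A
    simp only [Finset.mem_filter, Finset.mem_univ, true_and]
    constructor
    · rintro ⟨hind, hAK⟩
      refine ⟨fun x hx hxK => ?_, hind⟩
      have : x ∈ A ∩ K := Finset.mem_inter.mpr ⟨Finset.mem_coe.mp hx, Finset.mem_coe.mp hxK⟩
      rw [hAK] at this
      exact Finset.notMem_empty x this
    · rintro ⟨hsub, hind⟩
      refine ⟨hind, Finset.eq_empty_of_forall_notMem fun x hx => ?_⟩
      obtain ⟨hxA, hxK⟩ := Finset.mem_inter.mp hx
      exact hsub (Finset.mem_coe.mpr hxA) (Finset.mem_coe.mpr hxK)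
  set PH : Polynomial ℤ := ∑ B ∈ Finset.univ.filter
      (fun B : Finset V => (↑B : Set V) ⊆ T1 ∧ IsIndep G B), Polynomial.X ^ B.card with hPH
  set PL : Polynomial ℤ := ∑ B ∈ Finset.univ.filter
      (fun B : Finset V => (↑B : Set V) ⊆ T2 ∧ IsIndep G B), Polynomial.X ^ B.card with hPL
  have hQH : ∑ B ∈ Finset.univ.filter
      (fun B : Finset V => (↑B : Set V) ⊆ T1 ∧ IsIndep G B),
        (Polynomial.X ^ (B.card + 1) : Polynomial ℤ) = Polynomial.X * PH := by
    rw [hPH, Finset.mul_sum]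
    exact Finset.sum_congr rfl fun B _ => by rw [pow_succ, mul_comm]
  have hQL : ∑ B ∈ Finset.univ.filter
      (fun B : Finset V => (↑B : Set V) ⊆ T2 ∧ IsIndep G B),
        (Polynomial.X ^ (B.card + 1) : Polynomial ℤ) = Polynomial.X * PL := by
    rw [hPL, Finset.mul_sum]
    exact Finset.sum_congr rfl fun B _ => by rw [pow_succ, mul_comm]
  have hH : indepPoly (G.induce ((K : Set V)ᶜ)) = PH := indepPoly_induce_eq G T1
  have hL : indepPoly (G.induce (({s} ∪ {w | G.Adj s w} : Set V)ᶜ)) = PL := indepPoly_induce_eq G T2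
  rw [hF0, hH, hL, hQH, hQL, nsmul_eq_mul]
  simp only [Polynomial.C_eq_natCast]
  ring
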